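/- The Angenent oval a_t = {cos x = e^t cosh y}, t < 0, written locally as a graph, is a convex curve: parametrizing the upper half as y = arccosh(e^{-t} cos x), the enclosed region {(x,y) : cos x ≥ e^t cosh y} is a convex subset of ℝ². -/

import Mathlib

open Real

lemma convexOn_cosh' : ConvexOn ℝ Set.univ Real.cosh := by
  have h1 : ConvexOn ℝ Set.univ Real.exp := convexOn_exp
  have h2 : ConvexOn ℝ Set.univ (fun x : ℝ => Real.exp (-x)) :=
    h1.comp_affineMap (-AffineMap.id ℝ ℝ)
  have := (h1.add h2).smul (by norm_num : (0:ℝ) ≤ (1:ℝ)/2)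
  have heq : Real.cosh = fun x => (1/2:ℝ) • (Real.exp + fun x => Real.exp (-x)) x := by
    ext x
    rw [Real.cosh_eq]
    simp
    ring
  rw [heq]
  exact this

/-- For `t < 0`, the region enclosed by the Angenent oval
`{(x,y) : |x| ≤ π/2, cos x ≥ e^t cosh y}` is a convex subset of `ℝ²`; i.e. the
Angenent oval, as the boundary of this region, is a convex curve. -/
theorem angenentOval_convex :
    ∀ t < (0 : ℝ),
      Convex ℝ {p : ℝ × ℝ | |p.1| ≤ π / 2 ∧ Real.exp t * Real.cosh p.2 ≤ Real.cos p.1} := by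
  intro t _
  rintro ⟨x₁, y₁⟩ ⟨hx₁, h₁⟩ ⟨x₂, y₂⟩ ⟨hx₂, h₂⟩ a b ha hb hab
  simp only [Set.mem_setOf_eq, Prod.smul_mk, Prod.mk_add_mk, smul_eq_mul] at *
  have habs : |a * x₁ + b * x₂| ≤ π / 2 := by
    calc |a * x₁ + b * x₂| ≤ |a * x₁| + |b * x₂| := abs_add_le _ _
    _ = a * |x₁| + b * |x₂| := by rw [abs_mul, abs_mul, abs_of_nonneg ha, abs_of_nonneg hb]
    _ ≤ a * (π/2) + b * (π/2) := by
        gcongr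
    _ = π / 2 := by rw [← add_mul, hab, one_mul]
  refine ⟨habs, ?_⟩
  have hmem₁ : x₁ ∈ Set.Icc (-(π/2)) (π/2) := abs_le.mp hx₁
  have hmem₂ : x₂ ∈ Set.Icc (-(π/2)) (π/2) := abs_le.mp hx₂
  have hcos : a * Real.cos x₁ + b * Real.cos x₂ ≤ Real.cos (a * x₁ + b * x₂) := by
    rcases eq_or_lt_of_le ha with rfl | ha'
    · simp at hab; simp [hab]
    rcases eq_or_lt_of_le hb with rfl | hb'
    · simp at hab; simp [hab]
    have := strictConcaveOn_cos_Icc.concaveOn.2 hmem₁ hmem₂ ha hb hab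
    simpa using this
  have hcosh : Real.cosh (a * y₁ + b * y₂) ≤ a * Real.cosh y₁ + b * Real.cosh y₂ := by
    have := convexOn_cosh'.2 (Set.mem_univ y₁) (Set.mem_univ y₂) ha hb hab
    simpa using this
  calc Real.exp t * Real.cosh (a * y₁ + b * y₂)
      ≤ Real.exp t * (a * Real.cosh y₁ + b * Real.cosh y₂) := by
        gcongr
    _ = a * (Real.exp t * Real.cosh y₁) + b * (Real.exp t * Real.cosh y₂) := by ring
    _ ≤ a * Real.cos x₁ + b * Real.cos x₂ := by gcongr
    _ ≤ Real.cos (a * x₁ + b * x₂) := hcos
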